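/- Let $n$ be a positive integer and let $p$ and $r$ be distinct primes. Suppose there are positive integers $a$ and $b$ such that $p^a$ divides $n$ and $r^b < n < p^a + r^b$. Then for every $k$ with $0 < k < n$, at least one of $p$ or $r$ divides $\binom{n}{k}$. -/

import Mathlib

-- If p^a ∣ n and p ∤ C(n,k), then p^a ∣ k (for 0 < k ≤ n).
lemma aux_pow_dvd (n p a k : ℕ) (hp : p.Prime) (hpa : p ^ a ∣ n)
    (hk : 0 < k) (hkn : k ≤ n) (hnd : ¬ p ∣ Nat.choose n k) : p ^ a ∣ k := by
  obtain ⟨m, rfl⟩ := Nat.exists_eq_succ_of_ne_zero hk.ne'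
  obtain ⟨n', rfl⟩ := Nat.exists_eq_succ_of_ne_zero (Nat.lt_of_lt_of_le hk hkn).ne'
  have key : (n' + 1) * Nat.choose n' m = Nat.choose (n' + 1) (m + 1) * (m + 1) :=
    Nat.add_one_mul_choose_eq n' m
  have hdvd : p ^ a ∣ Nat.choose (n' + 1) (m + 1) * (m + 1) := key ▸ hpa.mul_right _
  have hcop : Nat.Coprime (p ^ a) (Nat.choose (n' + 1) (m + 1)) :=
    Nat.Coprime.pow_left _ ((Nat.Prime.coprime_iff_not_dvd hp).2 hnd)
  exact hcop.dvd_of_dvd_mul_left hdvd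

theorem stmt_4 (n p r a b : ℕ) (hn : 0 < n) (hp : p.Prime) (hr : r.Prime)
    (hpr : p ≠ r) (ha : 0 < a) (hb : 0 < b) (hpa : p ^ a ∣ n)
    (h1 : r ^ b < n) (h2 : n < p ^ a + r ^ b) :
    ∀ k, 0 < k → k < n → p ∣ Nat.choose n k ∨ r ∣ Nat.choose n k := by
  intro k hk hkn
  by_cases hpd : p ∣ Nat.choose n k
  · exact Or.inl hpd
  right
  -- p^a divides k and n - k
  have hdk : p ^ a ∣ k := aux_pow_dvd n p a k hp hpa hk hkn.le hpd
  have hdnk : p ^ a ∣ n - k := by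
    have h' : ¬ p ∣ Nat.choose n (n - k) := by
      rwa [Nat.choose_symm hkn.le]
    exact aux_pow_dvd n p a (n - k) hp hpa (by omega) (by omega) h'
  have hpak : p ^ a ≤ k := Nat.le_of_dvd hk hdk
  have hpank : p ^ a ≤ n - k := Nat.le_of_dvd (by omega) hdnk
  -- hence both k and n - k are less than r^b
  have hkr : k < r ^ b := by omega
  have hnkr : n - k < r ^ b := by omega
  -- Kummer: carry at digit b when adding k and n-k in base r
  have hlog : b ≤ Nat.log r n :=
    (Nat.le_log_iff_pow_le hr.one_lt hn.ne').2 h1.le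
  have hmul := Nat.Prime.emultiplicity_choose (p := r) (n := n) (k := k)
    (b := Nat.log r n + 1) hr hkn.le (Nat.lt_succ_self _)
  have hmem : b ∈ Finset.filter (fun i => r ^ i ≤ k % r ^ i + (n - k) % r ^ i)
      (Finset.Ico 1 (Nat.log r n + 1)) := by
    refine Finset.mem_filter.2 ⟨Finset.mem_Ico.2 ⟨hb, by omega⟩, ?_⟩
    rw [Nat.mod_eq_of_lt hkr, Nat.mod_eq_of_lt hnkr]
    omega
  have hcard : 1 ≤ (Finset.filter (fun i => r ^ i ≤ k % r ^ i + (n - k) % r ^ i)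
      (Finset.Ico 1 (Nat.log r n + 1))).card :=
    Finset.card_pos.2 ⟨b, hmem⟩
  have : (1 : ℕ∞) ≤ emultiplicity r (Nat.choose n k) := by
    rw [hmul]
    exact_mod_cast hcard
  simpa using pow_dvd_of_le_emultiplicity (k := 1) this
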